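/- Triangular dependence of the re-expansion map on its parameters (property (tri2) of Lemma 7.2): Fix a multi-index β. Let {π⁽ⁿ⁾}_{n ∈ ℕ²} and {π̂⁽ⁿ⁾}_{n ∈ ℕ²} be two families in ℝ[[z_k,z_n]] satisfying the population condition, whose components agree on all preceding multi-indices: π⁽ⁿ⁾_{β'} = π̂⁽ⁿ⁾_{β'} for every n ∈ ℕ² and every β' ≺ β. Then the associated re-expansion maps satisfy (Γ*)_β^γ = (Γ̂*)_β^γ for every multi-index γ with [γ] ≥ 0. -/

import Mathlib

open MvPowerSeries

noncomputable section

/-- Indices `n ∈ ℕ² \ {(0,0)}` for the variables `z_n`. -/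
abbrev Pos2 : Type := {p : ℕ × ℕ // p ≠ (0, 0)}

/-- The variables: `z_k` for `k ∈ ℕ` (left) and `z_n` for `n ∈ ℕ²\{0}` (right). -/
abbrev Var : Type := ℕ ⊕ Pos2

/-- Multi-indices: finitely supported functions from the variables to ℕ. -/
abbrev MIdx : Type := Var →₀ ℕ

/-- The algebra ℝ[[z_k, z_n]] of formal power series. -/
abbrev FPS : Type := MvPowerSeries Var ℝ

/-- The variable `z_k` as a power series. -/
def zk (k : ℕ) : FPS := MvPowerSeries.X (Sum.inl k)

/-- The variable `z_n` as a power series. -/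
def zn (n : Pos2) : FPS := MvPowerSeries.X (Sum.inr n)

/-- The derivation `D⁽⁰⁾ = Σ_k (k+1) z_{k+1} ∂_{z_k}`, defined componentwise by
`(D⁽⁰⁾π)_β = Σ_{k, β(k+1) ≥ 1} (k+1)(β(k)+1) π_{β + e_k - e_{k+1}}`. -/
def Dzero (π : FPS) : FPS := fun β =>
  ∑ j ∈ β.support,
    (match j with
     | Sum.inl (k + 1) =>
         ((k : ℝ) + 1) * ((β (Sum.inl k) : ℝ) + 1) *
           MvPowerSeries.coeff (R := ℝ)
             (β + Finsupp.single (Sum.inl k) 1 - Finsupp.single (Sum.inl (k + 1)) 1) π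
     | _ => 0)

/-- `c ∈ ℝ[[z_k]]`: the subalgebra of series with no `z_n`-dependence. -/
def OnlyZk (c : FPS) : Prop :=
  ∀ β : MIdx, (∃ n : Pos2, β (Sum.inr n) ≠ 0) → MvPowerSeries.coeff (R := ℝ) β c = 0

/-- `[β] := Σ_k k β(k) − Σ_n β(n)`. -/
def bracketZ (β : MIdx) : ℤ :=
  β.sum fun j m => (match j with | Sum.inl k => (k : ℤ) | Sum.inr _ => -1) * (m : ℤ)

/-- `|β|_p := Σ_n |n| β(n)` where `|n| = n₁ + 2 n₂`. -/
def homP (β : MIdx) : ℝ :=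
  β.sum fun j m =>
    (match j with | Sum.inl _ => (0 : ℝ) | Sum.inr n => (n.val.1 : ℝ) + 2 * n.val.2) * (m : ℝ)

/-- The homogeneity `|β| := α (1 + [β]) + |β|_p`. -/
def hom (α : ℝ) (β : MIdx) : ℝ := α * (1 + (bracketZ β : ℝ)) + homP β

/-- `|β|_≺ := |β| + λ β(0)`; the ordering is `γ ≺ β iff |γ|_≺ < |β|_≺`. -/
def ordP (α lam : ℝ) (β : MIdx) : ℝ := hom α β + lam * (β (Sum.inl 0) : ℝ)

/-- Row-finiteness of a matrix indexed by pairs of multi-indices. -/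
def RowFinite (Γ : MIdx → MIdx → ℝ) : Prop := ∀ β : MIdx, {γ : MIdx | Γ β γ ≠ 0}.Finite

/-- The linear map induced componentwise by a (row-finite) matrix. -/
def applyG (Γ : MIdx → MIdx → ℝ) (π : FPS) : FPS := fun β =>
  ∑ᶠ γ : MIdx, Γ β γ * MvPowerSeries.coeff (R := ℝ) γ π

/-- The prescribed image of `z_k`: `Σ_{l≥0} (k+l choose k) q^l z_{k+l}`, defined
componentwise (only finitely many `l` contribute to each component). -/
def gammaZk (q : FPS) (k : ℕ) : FPS := fun β =>
  ∑ᶠ l : ℕ, (((k + l).choose k : ℝ)) * MvPowerSeries.coeff (R := ℝ) β (q ^ l * zk (k + l))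

/-- The population condition `π⁽ⁿ⁾_β = 0 unless |n| < |β|`. -/
def PopCond (α : ℝ) (pin : ℕ × ℕ → FPS) : Prop :=
  ∀ (n : ℕ × ℕ) (β : MIdx),
    MvPowerSeries.coeff (R := ℝ) β (pin n) ≠ 0 → ((n.1 : ℝ) + 2 * n.2) < hom α β

/-- `Γ` is the re-expansion matrix associated to the family `{π⁽ⁿ⁾}_{n ∈ ℕ²}`:
row-finite, the induced map is a unital algebra endomorphism, and it maps the
coordinates `z_k`, `z_n` as prescribed. -/
def IsReExpansion (pin : ℕ × ℕ → FPS) (Γ : MIdx → MIdx → ℝ) : Prop :=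
  RowFinite Γ ∧
  (∀ π π' : FPS, applyG Γ (π * π') = applyG Γ π * applyG Γ π') ∧
  applyG Γ 1 = 1 ∧
  (∀ k : ℕ, applyG Γ (zk k) = gammaZk (pin (0, 0)) k) ∧
  (∀ n : Pos2, applyG Γ (zn n) = zn n + pin n.val)

/-! ### Auxiliary machinery for the proof -/

/-- The `|·|_p`-weight of a single variable. -/
def homPW : Var → ℝ
  | Sum.inl _ => 0
  | Sum.inr n => (n.val.1 : ℝ) + 2 * n.val.2

lemma homPW_inl (k : ℕ) : homPW (Sum.inl k) = 0 := rfl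
lemma homPW_inr (n : Pos2) : homPW (Sum.inr n) = (n.val.1 : ℝ) + 2 * n.val.2 := rfl

lemma homPW_nonneg (j : Var) : 0 ≤ homPW j := by
  rcases j with k | n
  · rw [homPW_inl]
  · rw [homPW_inr]; positivity

lemma homP_eq_sum (γ : MIdx) : homP γ = ∑ i ∈ γ.support, homPW i * (γ i : ℝ) := by
  unfold homP Finsupp.sum
  refine Finset.sum_congr rfl fun i _ => ?_
  rcases i with k | n
  · rw [homPW_inl]
  · rw [homPW_inr]

/-- The weighted bookkeeping function `sHom`. -/
def sHom (α lam : ℝ) (β : MIdx) : ℝ :=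
  α * (bracketZ β : ℝ) + homP β + lam * (β (Sum.inl 0) : ℝ)

lemma bracketZ_add (a b : MIdx) : bracketZ (a + b) = bracketZ a + bracketZ b := by
  unfold bracketZ
  apply Finsupp.sum_add_index'
  · intro j; simp
  · intro j m1 m2; push_cast; ring

lemma homP_add (a b : MIdx) : homP (a + b) = homP a + homP b := by
  unfold homP
  apply Finsupp.sum_add_index'
  · intro j; simp
  · intro j m1 m2; push_cast; ring

lemma sHom_add (α lam : ℝ) (a b : MIdx) :
    sHom α lam (a + b) = sHom α lam a + sHom α lam b := by
  unfold sHom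
  rw [bracketZ_add, homP_add, Finsupp.add_apply]
  push_cast; ring

lemma homP_nonneg (β : MIdx) : 0 ≤ homP β := by
  apply Finset.sum_nonneg
  intro j _
  rcases j with k | n
  · simp
  · positivity

lemma sHom_zero (α lam : ℝ) : sHom α lam 0 = 0 := by
  unfold sHom bracketZ homP
  simp

lemma ordP_eq (α lam : ℝ) (β : MIdx) : ordP α lam β = α + sHom α lam β := by
  unfold ordP hom sHom; ring

lemma bracketZ_single (j : Var) (m : ℕ) :
    bracketZ (Finsupp.single j m)
      = (match j with | Sum.inl k => (k : ℤ) | Sum.inr _ => -1) * (m : ℤ) := by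
  unfold bracketZ
  exact Finsupp.sum_single_index (by simp)

lemma homP_single (j : Var) (m : ℕ) :
    homP (Finsupp.single j m)
      = (match j with | Sum.inl _ => (0:ℝ) | Sum.inr n => (n.val.1 : ℝ) + 2 * n.val.2) * (m : ℝ) := by
  unfold homP
  exact Finsupp.sum_single_index (by simp)

lemma sHom_single_inl (α lam : ℝ) (k m : ℕ) :
    sHom α lam (Finsupp.single (Sum.inl k) m)
      = α * k * m + (if k = 0 then lam * m else 0) := by
  unfold sHom
  rw [bracketZ_single, homP_single]
  rw [Finsupp.single_apply]
  by_cases hk : k = 0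
  · subst hk
    rw [if_pos rfl, if_pos rfl]
    push_cast; ring
  · have h2 : (Sum.inl k : Var) ≠ Sum.inl 0 := by simp [hk]
    rw [if_neg h2, if_neg hk]
    push_cast; ring

lemma sHom_single_inr (α lam : ℝ) (n : Pos2) (m : ℕ) :
    sHom α lam (Finsupp.single (Sum.inr n) m)
      = (((n.val.1 : ℝ) + 2 * n.val.2) - α) * m := by
  unfold sHom
  rw [bracketZ_single, homP_single]
  have : (Finsupp.single (Sum.inr n : Var) m) (Sum.inl 0) = 0 := by
    rw [Finsupp.single_apply, if_neg (by simp)]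
  rw [this]
  push_cast; ring

lemma abs_pos2_ge_one (n : Pos2) : (1:ℝ) ≤ (n.val.1 : ℝ) + 2 * n.val.2 := by
  rcases n with ⟨⟨n1, n2⟩, hn⟩
  simp only
  rcases Nat.eq_zero_or_pos n1 with h1 | h1
  · rcases Nat.eq_zero_or_pos n2 with h2 | h2
    · exact absurd (by simp [h1, h2, Prod.ext_iff]) hn
    · have : (1:ℝ) ≤ (n2 : ℝ) := by exact_mod_cast h2
      have h0 : (0:ℝ) ≤ (n1 : ℝ) := by positivity
      linarith
  · have : (1:ℝ) ≤ (n1 : ℝ) := by exact_mod_cast h1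
    have h0 : (0:ℝ) ≤ (n2 : ℝ) := by positivity
    linarith

/-- All components of `π` live at multi-indices of weight `≥ c`. -/
def PosGE (α lam c : ℝ) (π : FPS) : Prop :=
  ∀ β' : MIdx, MvPowerSeries.coeff (R := ℝ) β' π ≠ 0 → c ≤ sHom α lam β'

/-- `π` and `π'` agree on all components of weight `< t`. -/
def EqLT (α lam t : ℝ) (π π' : FPS) : Prop :=
  ∀ β' : MIdx, sHom α lam β' < t → MvPowerSeries.coeff (R := ℝ) β' π = MvPowerSeries.coeff (R := ℝ) β' π'

lemma posGE_mono {α lam c c' : ℝ} {π : FPS} (h : PosGE α lam c π) (hle : c' ≤ c) :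
    PosGE α lam c' π := fun β' hb => le_trans hle (h β' hb)

lemma eqLT_mono {α lam t t' : ℝ} {π π' : FPS} (h : EqLT α lam t π π') (hle : t' ≤ t) :
    EqLT α lam t' π π' := fun β' hb => h β' (lt_of_lt_of_le hb hle)

lemma eqLT_refl (α lam t : ℝ) (π : FPS) : EqLT α lam t π π := fun _ _ => rfl

lemma posGE_one (α lam : ℝ) : PosGE α lam 0 (1 : FPS) := by
  intro β' hb
  rw [MvPowerSeries.coeff_one] at hb
  have : β' = 0 := by by_contra hc; simp [hc] at hb
  rw [this, sHom_zero]

lemma posGE_mul {α lam a b : ℝ} {π ρ : FPS}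
    (hπ : PosGE α lam a π) (hρ : PosGE α lam b ρ) : PosGE α lam (a + b) (π * ρ) := by
  intro β' hb
  rw [MvPowerSeries.coeff_mul] at hb
  obtain ⟨p, hp, hne⟩ := Finset.exists_ne_zero_of_sum_ne_zero hb
  rw [Finset.HasAntidiagonal.mem_antidiagonal] at hp
  have h1 : MvPowerSeries.coeff (R := ℝ) p.1 π ≠ 0 := fun h => hne (by rw [h, zero_mul])
  have h2 : MvPowerSeries.coeff (R := ℝ) p.2 ρ ≠ 0 := fun h => hne (by rw [h, mul_zero])
  have := hπ _ h1
  have := hρ _ h2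
  have hs : sHom α lam β' = sHom α lam p.1 + sHom α lam p.2 := by
    rw [← hp, sHom_add]
  linarith

lemma eqLT_mul {α lam t1 t2 a1 a2 : ℝ} {π πh ρ ρh : FPS}
    (hE1 : EqLT α lam t1 π πh) (hP1 : PosGE α lam a1 π) (hP1h : PosGE α lam a1 πh)
    (hE2 : EqLT α lam t2 ρ ρh) (hP2 : PosGE α lam a2 ρ) (hP2h : PosGE α lam a2 ρh) :
    EqLT α lam (min (t1 + a2) (t2 + a1)) (π * ρ) (πh * ρh) := by
  intro β' hβ'
  rw [MvPowerSeries.coeff_mul, MvPowerSeries.coeff_mul]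
  refine Finset.sum_congr rfl fun p hp => ?_
  rw [Finset.HasAntidiagonal.mem_antidiagonal] at hp
  have hs : sHom α lam β' = sHom α lam p.1 + sHom α lam p.2 := by
    rw [← hp, sHom_add]
  by_cases h1 : sHom α lam p.1 < t1
  · by_cases h2 : sHom α lam p.2 < t2
    · rw [hE1 _ h1, hE2 _ h2]
    · push_neg at h2
      have hlt : sHom α lam β' < t2 + a1 := lt_of_lt_of_le hβ' (min_le_right _ _)
      have hsm : sHom α lam p.1 < a1 := by linarith
      have z1 : MvPowerSeries.coeff (R := ℝ) p.1 π = 0 := by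
        by_contra hc; exact absurd (hP1 _ hc) (not_le.2 hsm)
      have z1h : MvPowerSeries.coeff (R := ℝ) p.1 πh = 0 := by
        by_contra hc; exact absurd (hP1h _ hc) (not_le.2 hsm)
      rw [z1, z1h, zero_mul, zero_mul]
  · push_neg at h1
    have hlt : sHom α lam β' < t1 + a2 := lt_of_lt_of_le hβ' (min_le_left _ _)
    have hsm : sHom α lam p.2 < a2 := by linarith
    have z2 : MvPowerSeries.coeff (R := ℝ) p.2 ρ = 0 := by
      by_contra hc; exact absurd (hP2 _ hc) (not_le.2 hsm)
    have z2h : MvPowerSeries.coeff (R := ℝ) p.2 ρh = 0 := by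
      by_contra hc; exact absurd (hP2h _ hc) (not_le.2 hsm)
    rw [z2, z2h, mul_zero, mul_zero]

lemma posGE_pow {α lam a : ℝ} {π : FPS} (h : PosGE α lam a π) :
    ∀ m : ℕ, PosGE α lam (m * a) (π ^ m) := by
  intro m
  induction m with
  | zero => rw [pow_zero]; exact posGE_mono (posGE_one α lam) (by simp)
  | succ m ih =>
      rw [pow_succ]
      exact posGE_mono (posGE_mul ih h) (le_of_eq (by push_cast; ring))

/-- Weight contributed by one power of the variable `j`. -/
def ajW (α : ℝ) : Var → ℝ
  | Sum.inl k => α * k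
  | Sum.inr n => ((n.val.1 : ℝ) + 2 * n.val.2) - α

lemma ajW_inl (α : ℝ) (k : ℕ) : ajW α (Sum.inl k) = α * k := rfl
lemma ajW_inr (α : ℝ) (n : Pos2) : ajW α (Sum.inr n) = ((n.val.1 : ℝ) + 2 * n.val.2) - α := rfl

/-- Threshold slack of the variable `j`. -/
def wjW (α : ℝ) : Var → ℝ
  | Sum.inl _ => α
  | Sum.inr n => α - ((n.val.1 : ℝ) + 2 * n.val.2)

lemma wjW_inl (α : ℝ) (k : ℕ) : wjW α (Sum.inl k) = α := rfl
lemma wjW_inr (α : ℝ) (n : Pos2) : wjW α (Sum.inr n) = α - ((n.val.1 : ℝ) + 2 * n.val.2) := rfl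


lemma posGE_X (α lam : ℝ) (hlam0 : 0 ≤ lam) (j : Var) (c : ℝ)
    (hc : c ≤ ajW α j) :
    PosGE α lam c (MvPowerSeries.X j : FPS) := by
  intro β' hb
  rw [MvPowerSeries.coeff_X] at hb
  have hβ : β' = Finsupp.single j 1 := by by_contra hcon; simp [hcon] at hb
  subst hβ
  rcases j with k | n
  · rw [sHom_single_inl]
    rw [ajW_inl] at hc
    by_cases hk : k = 0
    · rw [if_pos hk]; push_cast; nlinarith
    · rw [if_neg hk]; push_cast; linarith
  · rw [sHom_single_inr]
    rw [ajW_inr] at hc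
    push_cast; linarith

/-- Total weight of a multi-index `γ` (no `lam`-part). -/
def sigW (α : ℝ) (γ : MIdx) : ℝ := α * (bracketZ γ : ℝ) + homP γ

lemma sigW_add (α : ℝ) (a b : MIdx) : sigW α (a + b) = sigW α a + sigW α b := by
  unfold sigW; rw [bracketZ_add, homP_add]; push_cast; ring

lemma sigW_zero (α : ℝ) : sigW α 0 = 0 := by
  unfold sigW bracketZ homP; simp

lemma sigW_single (α : ℝ) (j : Var) (m : ℕ) :
    sigW α (Finsupp.single j m) = m * ajW α j := by
  unfold sigW
  rw [bracketZ_single, homP_single]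
  rcases j with k | n <;> (first | rw [ajW_inl] | rw [ajW_inr]) <;> (push_cast; ring)

lemma posGE_pin {α lam : ℝ} (hlam0 : 0 ≤ lam) {pin : ℕ × ℕ → FPS}
    (hpop : PopCond α pin) (n : ℕ × ℕ) :
    PosGE α lam (((n.1 : ℝ) + 2 * n.2) - α) (pin n) := by
  intro β' hb
  have h := hpop n β' hb
  have hs : sHom α lam β' = hom α β' - α + lam * (β' (Sum.inl 0) : ℝ) := by
    unfold sHom hom; ring
  have h0 : (0:ℝ) ≤ lam * (β' (Sum.inl 0) : ℝ) := by positivity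
  linarith

lemma applyG_pow {Γ : MIdx → MIdx → ℝ}
    (hmul : ∀ π π' : FPS, applyG Γ (π * π') = applyG Γ π * applyG Γ π')
    (hone : applyG Γ 1 = 1) (π : FPS) : ∀ m : ℕ, applyG Γ (π ^ m) = (applyG Γ π) ^ m := by
  intro m
  induction m with
  | zero => rw [pow_zero, pow_zero, hone]
  | succ m ih => rw [pow_succ, pow_succ, hmul, ih]

lemma applyG_monomial {Γ : MIdx → MIdx → ℝ}
    (hmul : ∀ π π' : FPS, applyG Γ (π * π') = applyG Γ π * applyG Γ π')
    (hone : applyG Γ 1 = 1) (γ : MIdx) :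
    applyG Γ ((MvPowerSeries.monomial (R := ℝ) γ) 1)
      = γ.prod fun j m => (applyG Γ (MvPowerSeries.X j)) ^ m := by
  induction γ using Finsupp.induction with
  | zero => rw [Finsupp.prod_zero_index]; exact hone
  | single_add a b f ha hb ih =>
      have hmon : ((MvPowerSeries.monomial (R := ℝ) (Finsupp.single a b + f)) 1 : FPS)
          = MvPowerSeries.X a ^ b * (MvPowerSeries.monomial (R := ℝ) f) 1 := by
        rw [MvPowerSeries.X_pow_eq, MvPowerSeries.monomial_mul_monomial, one_mul]
      rw [hmon, hmul, applyG_pow hmul hone, ih,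
        Finsupp.prod_add_index' (h := fun j m => (applyG Γ (MvPowerSeries.X j)) ^ m)
          (fun j => pow_zero _) (fun j m1 m2 => pow_add _ m1 m2),
        Finsupp.prod_single_index (h := fun j m => (applyG Γ (MvPowerSeries.X j)) ^ m)
          (pow_zero _)]

lemma coeff_applyG_monomial (Γ : MIdx → MIdx → ℝ) (β γ : MIdx) :
    Γ β γ = MvPowerSeries.coeff (R := ℝ) β (applyG Γ ((MvPowerSeries.monomial (R := ℝ) γ) 1)) := by
  rw [MvPowerSeries.coeff_apply]
  show Γ β γ = ∑ᶠ δ : MIdx, Γ β δ * MvPowerSeries.coeff (R := ℝ) δ ((MvPowerSeries.monomial (R := ℝ) γ) 1)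
  rw [finsum_eq_single _ γ (fun δ hδ => by
    rw [MvPowerSeries.coeff_monomial, if_neg hδ, mul_zero])]
  rw [MvPowerSeries.coeff_monomial, if_pos rfl, mul_one]

/-- Triangular dependence of the re-expansion map on its parameters (property (tri2)):
if two families agree on all components indexed by multi-indices `β' ≺ β`, then the
associated re-expansion matrices agree in row `β` on all columns `γ` with `[γ] ≥ 0`. -/
theorem stmt_16 (α lam : ℝ) (hα0 : 0 < α) (hα1 : α < 1) (hlam0 : 0 < lam) (hlam : lam < α)
    (β : MIdx) (pin pinh : ℕ × ℕ → FPS) (hpop : PopCond α pin) (hpoph : PopCond α pinh)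
    (hagree : ∀ (n : ℕ × ℕ) (β' : MIdx), ordP α lam β' < ordP α lam β →
      MvPowerSeries.coeff (R := ℝ) β' (pin n) = MvPowerSeries.coeff (R := ℝ) β' (pinh n))
    (Γ Γh : MIdx → MIdx → ℝ) (hΓ : IsReExpansion pin Γ) (hΓh : IsReExpansion pinh Γh) :
    ∀ γ : MIdx, 0 ≤ bracketZ γ → Γ β γ = Γh β γ := by
  obtain ⟨-, hmul, hone, hzk, hzn⟩ := hΓ
  obtain ⟨-, hmulh, honeh, hzkh, hznh⟩ := hΓh
  set q : FPS := pin (0, 0) with hq_def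
  set qh : FPS := pinh (0, 0) with hqh_def
  set sβ : ℝ := sHom α lam β with hsβ_def
  -- agreement below `sβ` transported through `sHom`
  have hagree' : ∀ (n : ℕ × ℕ), EqLT α lam sβ (pin n) (pinh n) := by
    intro n β' h
    exact hagree n β' (by rw [ordP_eq, ordP_eq]; linarith)
  -- facts about q
  have hq_pos : PosGE α lam (-α) q := by
    have := posGE_pin (α := α) (lam := lam) hlam0.le hpop (0, 0)
    exact posGE_mono this (by norm_num)
  have hqh_pos : PosGE α lam (-α) qh := by
    have := posGE_pin (α := α) (lam := lam) hlam0.le hpoph (0, 0)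
    exact posGE_mono this (by norm_num)
  have hq_eq : EqLT α lam sβ q qh := hagree' (0, 0)
  -- facts about powers of q
  have hql : ∀ l : ℕ, PosGE α lam (-(l * α)) (q ^ l) ∧ PosGE α lam (-(l * α)) (qh ^ l) ∧
      EqLT α lam (sβ + α - l * α) (q ^ l) (qh ^ l) := by
    intro l
    induction l with
    | zero =>
        refine ⟨?_, ?_, ?_⟩
        · rw [pow_zero]; exact posGE_mono (posGE_one α lam) (by norm_num)
        · rw [pow_zero]; exact posGE_mono (posGE_one α lam) (by norm_num)
        · rw [pow_zero, pow_zero]; exact eqLT_refl _ _ _ _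
    | succ l ih =>
        obtain ⟨ih1, ih2, ih3⟩ := ih
        refine ⟨?_, ?_, ?_⟩
        · rw [pow_succ]
          exact posGE_mono (posGE_mul ih1 hq_pos) (le_of_eq (by push_cast; ring))
        · rw [pow_succ]
          exact posGE_mono (posGE_mul ih2 hqh_pos) (le_of_eq (by push_cast; ring))
        · rw [pow_succ, pow_succ]
          refine eqLT_mono (eqLT_mul ih3 ih1 ih2 hq_eq hq_pos hqh_pos) ?_
          refine le_min (le_of_eq (by push_cast; ring)) (le_of_eq (by push_cast; ring))
  -- per-variable facts
  have keyvar : ∀ j : Var,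
      PosGE α lam (ajW α j) (applyG Γ (MvPowerSeries.X j)) ∧
      PosGE α lam (ajW α j) (applyG Γh (MvPowerSeries.X j)) ∧
      EqLT α lam (sβ + wjW α j + ajW α j)
        (applyG Γ (MvPowerSeries.X j)) (applyG Γh (MvPowerSeries.X j)) := by
    intro j
    rcases j with k | n
    · -- z_k variable: image is gammaZk
      have hG : applyG Γ (MvPowerSeries.X (Sum.inl k) : FPS) = gammaZk q k := hzk k
      have hGh : applyG Γh (MvPowerSeries.X (Sum.inl k) : FPS) = gammaZk qh k := hzkh k
      have hco : ∀ (c : FPS) (β' : MIdx), MvPowerSeries.coeff (R := ℝ) β' (gammaZk c k)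
          = ∑ᶠ l : ℕ, (((k + l).choose k : ℝ))
              * MvPowerSeries.coeff (R := ℝ) β' (c ^ l * zk (k + l)) := fun c β' => rfl
      have hX : ∀ l : ℕ, PosGE α lam (α * (k + l)) (zk (k + l)) := by
        intro l
        have := posGE_X α lam hlam0.le (Sum.inl (k + l)) (α * (k + l))
          (le_of_eq (by rw [ajW_inl]; push_cast; ring))
        exact this
      have hterm_pos : ∀ (c : FPS), PosGE α lam (-α) c →
          ∀ l : ℕ, PosGE α lam (α * k) (c ^ l * zk (k + l)) := by
        intro c hc l
        have hcl : PosGE α lam (-(l * α)) (c ^ l) := by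
          clear hco
          induction l with
          | zero => rw [pow_zero]; exact posGE_mono (posGE_one α lam) (by norm_num)
          | succ l ih =>
              rw [pow_succ]
              exact posGE_mono (posGE_mul ih hc) (le_of_eq (by push_cast; ring))
        exact posGE_mono (posGE_mul hcl (hX l)) (le_of_eq (by push_cast; ring))
      have hterm_eq : ∀ l : ℕ, EqLT α lam (sβ + α + α * k)
          (q ^ l * zk (k + l)) (qh ^ l * zk (k + l)) := by
        intro l
        obtain ⟨h1, h2, h3⟩ := hql l
        refine eqLT_mono (eqLT_mul h3 h1 h2
          (eqLT_refl α lam (sβ + α + α * k + l * α) (zk (k + l))) (hX l) (hX l)) ?_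
        refine le_min (le_of_eq (by push_cast; ring)) (le_of_eq (by push_cast; ring))
      refine ⟨?_, ?_, ?_⟩
      · rw [hG]
        intro β' hb
        rw [hco] at hb
        have hex : ∃ l : ℕ, (((k + l).choose k : ℝ))
            * MvPowerSeries.coeff (R := ℝ) β' (q ^ l * zk (k + l)) ≠ 0 := by
          by_contra hall
          push_neg at hall
          exact hb (by rw [finsum_congr hall, finsum_zero])
        obtain ⟨l, hl⟩ := hex
        have : MvPowerSeries.coeff (R := ℝ) β' (q ^ l * zk (k + l)) ≠ 0 := right_ne_zero_of_mul hl
        have := hterm_pos q hq_pos l β' this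
        rw [ajW_inl]; linarith
      · rw [hGh]
        intro β' hb
        rw [hco] at hb
        have hex : ∃ l : ℕ, (((k + l).choose k : ℝ))
            * MvPowerSeries.coeff (R := ℝ) β' (qh ^ l * zk (k + l)) ≠ 0 := by
          by_contra hall
          push_neg at hall
          exact hb (by rw [finsum_congr hall, finsum_zero])
        obtain ⟨l, hl⟩ := hex
        have : MvPowerSeries.coeff (R := ℝ) β' (qh ^ l * zk (k + l)) ≠ 0 := right_ne_zero_of_mul hl
        have := hterm_pos qh hqh_pos l β' this
        rw [ajW_inl]; linarith
      · rw [hG, hGh]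
        intro β' hβ'
        rw [hco, hco]
        refine finsum_congr fun l => ?_
        have : sHom α lam β' < sβ + α + α * k := by
          rw [ajW_inl, wjW_inl] at hβ'; linarith
        rw [hterm_eq l β' this]
    · -- z_n variable: image is z_n + π⁽ⁿ⁾
      have hG : applyG Γ (MvPowerSeries.X (Sum.inr n) : FPS) = zn n + pin n.val := hzn n
      have hGh : applyG Γh (MvPowerSeries.X (Sum.inr n) : FPS) = zn n + pinh n.val := hznh n
      have habs : (1:ℝ) ≤ (n.val.1 : ℝ) + 2 * n.val.2 := abs_pos2_ge_one n
      have hXn : PosGE α lam (ajW α (Sum.inr n)) (zn n) :=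
        posGE_X α lam hlam0.le (Sum.inr n) _ (le_of_eq rfl)
      have hpinn : PosGE α lam (ajW α (Sum.inr n)) (pin n.val) := by
        have := posGE_pin (α := α) (lam := lam) hlam0.le hpop n.val
        exact posGE_mono this (le_of_eq rfl)
      have hpinnh : PosGE α lam (ajW α (Sum.inr n)) (pinh n.val) := by
        have := posGE_pin (α := α) (lam := lam) hlam0.le hpoph n.val
        exact posGE_mono this (le_of_eq rfl)
      have hsum_pos : ∀ (c : FPS), PosGE α lam (ajW α (Sum.inr n)) c →
          PosGE α lam (ajW α (Sum.inr n)) (zn n + c) := by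
        intro c hc β' hb
        rw [map_add] at hb
        by_cases h1 : MvPowerSeries.coeff (R := ℝ) β' (zn n) = 0
        · have h2 : MvPowerSeries.coeff (R := ℝ) β' c ≠ 0 := by
            intro h2; exact hb (by rw [h1, h2, add_zero])
          exact hc β' h2
        · exact hXn β' h1
      refine ⟨?_, ?_, ?_⟩
      · rw [hG]; exact hsum_pos _ hpinn
      · rw [hGh]; exact hsum_pos _ hpinnh
      · rw [hG, hGh]
        intro β' hβ'
        rw [map_add, map_add, hagree' n.val β' (by
          rw [ajW_inr, wjW_inr] at hβ'; linarith)]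
  -- powers of the per-variable images, m ≥ 1
  have keypow : ∀ (j : Var) (m : ℕ), 1 ≤ m →
      PosGE α lam (m * ajW α j) ((applyG Γ (MvPowerSeries.X j)) ^ m) ∧
      PosGE α lam (m * ajW α j) ((applyG Γh (MvPowerSeries.X j)) ^ m) ∧
      EqLT α lam (sβ + wjW α j + m * ajW α j)
        ((applyG Γ (MvPowerSeries.X j)) ^ m) ((applyG Γh (MvPowerSeries.X j)) ^ m) := by
    intro j m hm
    obtain ⟨k1, k2, k3⟩ := keyvar j
    induction m, hm using Nat.le_induction with
    | base =>
        rw [pow_one, pow_one]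
        exact ⟨posGE_mono k1 (by norm_num), posGE_mono k2 (by norm_num),
          eqLT_mono k3 (le_of_eq (by push_cast; ring))⟩
    | succ m hm ih =>
        obtain ⟨ih1, ih2, ih3⟩ := ih
        refine ⟨?_, ?_, ?_⟩
        · rw [pow_succ]
          exact posGE_mono (posGE_mul ih1 k1) (le_of_eq (by push_cast; ring))
        · rw [pow_succ]
          exact posGE_mono (posGE_mul ih2 k2) (le_of_eq (by push_cast; ring))
        · rw [pow_succ, pow_succ]
          refine eqLT_mono (eqLT_mul ih3 ih1 ih2 k3 k1 k2) ?_
          exact le_min (le_of_eq (by push_cast; ring)) (le_of_eq (by push_cast; ring))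
  -- the main induction over γ
  have main : ∀ γ : MIdx,
      PosGE α lam (sigW α γ) (γ.prod fun j m => (applyG Γ (MvPowerSeries.X j)) ^ m) ∧
      PosGE α lam (sigW α γ) (γ.prod fun j m => (applyG Γh (MvPowerSeries.X j)) ^ m) ∧
      ∀ r : ℝ, (∀ j ∈ γ.support, r ≤ wjW α j) →
        EqLT α lam (sβ + sigW α γ + r)
          (γ.prod fun j m => (applyG Γ (MvPowerSeries.X j)) ^ m)
          (γ.prod fun j m => (applyG Γh (MvPowerSeries.X j)) ^ m) := by
    intro γ
    induction γ using Finsupp.induction with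
    | zero =>
        rw [Finsupp.prod_zero_index, Finsupp.prod_zero_index, sigW_zero]
        exact ⟨posGE_one α lam, posGE_one α lam,
          fun r _ β' h => rfl⟩
    | single_add a b f haf hb ih =>
        obtain ⟨ih1, ih2, ih3⟩ := ih
        have hsplit : ∀ (G : Var → FPS),
            ((Finsupp.single a b + f).prod fun j m => (G j) ^ m)
              = (G a) ^ b * (f.prod fun j m => (G j) ^ m) := by
          intro G
          rw [Finsupp.prod_add_index' (h := fun j m => (G j) ^ m)
              (fun j => pow_zero _) (fun j m1 m2 => pow_add _ m1 m2),
            Finsupp.prod_single_index (h := fun j m => (G j) ^ m) (pow_zero _)]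
        have hσ : sigW α (Finsupp.single a b + f) = b * ajW α a + sigW α f := by
          rw [sigW_add, sigW_single]
        have hb1 : 1 ≤ b := Nat.one_le_iff_ne_zero.mpr hb
        obtain ⟨kp1, kp2, kp3⟩ := keypow a b hb1
        have hamem : a ∈ (Finsupp.single a b + f).support := by
          rw [Finsupp.mem_support_iff, Finsupp.add_apply, Finsupp.single_eq_same,
            Finsupp.notMem_support_iff.mp haf, add_zero]
          exact hb
        have hsub : ∀ j ∈ f.support, j ∈ (Finsupp.single a b + f).support := by
          intro j hj
          rw [Finsupp.mem_support_iff, Finsupp.add_apply]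
          rw [Finsupp.mem_support_iff] at hj
          omega
        refine ⟨?_, ?_, ?_⟩
        · rw [hsplit, hσ]
          exact posGE_mul kp1 ih1
        · rw [hsplit, hσ]
          exact posGE_mul kp2 ih2
        · intro r hr
          rw [hsplit, hsplit, hσ]
          have hra : r ≤ wjW α a := hr a hamem
          have hrf : ∀ j ∈ f.support, r ≤ wjW α j := fun j hj => hr j (hsub j hj)
          refine eqLT_mono (eqLT_mul kp3 kp1 kp2 (ih3 r hrf) ih1 ih2) ?_
          refine le_min (by linarith) (le_of_eq (by ring))
  -- conclusion
  intro γ hγ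
  rw [coeff_applyG_monomial Γ β γ, coeff_applyG_monomial Γh β γ,
    applyG_monomial hmul hone, applyG_monomial hmulh honeh]
  obtain ⟨-, -, hEq⟩ := main γ
  have hsupp : ∀ j ∈ γ.support, α - homP γ ≤ wjW α j := by
    intro j hj
    rcases j with k | n
    · have := homP_nonneg γ
      rw [wjW_inl]; linarith
    · have hmem : γ (Sum.inr n) ≠ 0 := Finsupp.mem_support_iff.mp hj
      have h1 : (1:ℝ) ≤ (γ (Sum.inr n) : ℝ) := by exact_mod_cast Nat.one_le_iff_ne_zero.mpr hmem
      have habs : (0:ℝ) ≤ (n.val.1 : ℝ) + 2 * n.val.2 := by positivity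
      have hterm : homPW (Sum.inr n) * (γ (Sum.inr n) : ℝ) ≤ homP γ := by
        rw [homP_eq_sum]
        refine Finset.single_le_sum (f := fun i => homPW i * (γ i : ℝ)) ?_ hj
        intro i _
        have := homPW_nonneg i
        positivity
      rw [homPW_inr] at hterm
      have : (n.val.1 : ℝ) + 2 * n.val.2 ≤ homP γ := by nlinarith
      rw [wjW_inr]; linarith
  have hbz : (0:ℝ) ≤ (bracketZ γ : ℝ) := by exact_mod_cast hγ
  have hfinal : sHom α lam β < sβ + sigW α γ + (α - homP γ) := by
    rw [hsβ_def]
    unfold sigW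
    nlinarith [mul_nonneg hα0.le hbz]
  exact hEq (α - homP γ) hsupp β hfinal
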